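/- Let a, b, c be real numbers with a ≥ 1, b ≥ 1, c ≥ 1 satisfying the strict triangle inequalities a < b + c, b < a + c, c < a + b. Put s = (a + b + c)/2 and K = √(s·(s−a)·(s−b)·(s−c)) (Heron's area). Then the sum of the circumradius and the inradius satisfies (a·b·c)/(4·K) + K/s ≥ √3/2, with equality if and only if a = b = c = 1. -/
import Mathlib

theorem sorted_case (x y z : ℝ) (hx : 0 < x) (hxy : x ≤ y) (hyz : y ≤ z)
    (h1 : 1 ≤ x + y) :
    12*(x+y+z)*(x*y*z) ≤ ((x+y+z)*(x*y+y*z+z*x)+3*(x*y*z))^2 ∧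
      (((x+y+z)*(x*y+y*z+z*x)+3*(x*y*z))^2 = 12*(x+y+z)*(x*y*z) →
        x = 1/2 ∧ y = 1/2 ∧ z = 1/2) := by
  have he : (0:ℝ) ≤ y - x := by linarith
  have hf : (0:ℝ) ≤ z - y := by linarith
  have hy : 0 < y := lt_of_lt_of_le hx hxy
  have hz : 0 < z := lt_of_lt_of_le hy hyz
  have hD : ((x+y+z)*(x*y+y*z+z*x)+3*(x*y*z))^2 - 12*(x+y+z)*(x*y*z)*(x+y)^2 =
      48*x^5*(y-x)^1 + 96*x^5*(z-y)^1 + 156*x^4*(y-x)^2 + 384*x^4*(y-x)^1*(z-y)^1 + 144*x^4*(z-y)^2 + 192*x^3*(y-x)^3 + 552*x^3*(y-x)^2*(z-y)^1 + 360*x^3*(y-x)^1*(z-y)^2 + 48*x^3*(z-y)^3 + 112*x^2*(y-x)^4 + 356*x^2*(y-x)^3*(z-y)^1 + 312*x^2*(y-x)^2*(z-y)^2 + 80*x^2*(y-x)^1*(z-y)^3 + 4*x^2*(z-y)^4 + 32*x^1*(y-x)^5 + 104*x^1*(y-x)^4*(z-y)^1 + 108*x^1*(y-x)^3*(z-y)^2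 + 40*x^1*(y-x)^2*(z-y)^3 + 4*x^1*(y-x)^1*(z-y)^4 + 4*(y-x)^6 + 12*(y-x)^5*(z-y)^1 + 13*(y-x)^4*(z-y)^2 + 6*(y-x)^3*(z-y)^3 + 1*(y-x)^2*(z-y)^4 := by
    ring
  have hsp : 0 < (x+y+z)*(x*y*z) := by positivity
  have hA : 0 ≤ 12*((x+y+z)*(x*y*z))*((x+y)^2 - 1) := by
    have h2 : 0 ≤ (x+y)^2 - 1 := by nlinarith
    positivity
  constructor
  · linarith [hD, hA, mul_nonneg (mul_nonneg (pow_nonneg hx.le 5) (pow_nonneg he 1)) (pow_nonneg hf 0), mul_nonneg (mul_nonneg (pow_nonneg hx.le 5) (pow_nonneg he 0)) (pow_nonneg hf 1), mul_nonneg (mul_nonneg (pow_nonneg hx.le 4) (pow_nonneg he 2)) (pow_nonneg hf 0), mul_nonneg (mul_nonneg (pow_nonneg hx.le 4) (pow_nonneg he 1)) (pow_nonneg hf 1), mul_nonneg (mul_nonneg (pow_nonneg hx.le 4) (pow_nonneg he 0)) (pow_nonneg hf 2), mul_nonneg (mul_nonneg (pow_nonneg hx.le 3) (pow_nonneg he 3))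 (pow_nonneg hf 0), mul_nonneg (mul_nonneg (pow_nonneg hx.le 3) (pow_nonneg he 2)) (pow_nonneg hf 1), mul_nonneg (mul_nonneg (pow_nonneg hx.le 3) (pow_nonneg he 1)) (pow_nonneg hf 2), mul_nonneg (mul_nonneg (pow_nonneg hx.le 3) (pow_nonneg he 0)) (pow_nonneg hf 3), mul_nonneg (mul_nonneg (pow_nonneg hx.le 2) (pow_nonneg he 4)) (pow_nonneg hf 0), mul_nonneg (mul_nonneg (pow_nonneg hx.le 2) (pow_nonneg he 3)) (pow_nonneg hf 1), mul_nonneg (mul_nonneg (pow_nonneg hx.le 2) (pow_nonneg he 2)) (pow_nonneg hf 2), mul_nonneg (mul_nonneg (pow_nonneg hx.le 2) (pow_nonneg he 1)) (pow_nonneg hf 3), mul_nonneg (mul_nonneg (pow_nonneg hx.le 2) (pow_nonneg he 0)) (pow_nonneg hf 4), mul_nonneg (mul_nonneg (pow_nonneg hx.le 1) (pow_nonneg he 5)) (pow_nonneg hf 0), mul_nonneg (mul_nonneg (pow_nonneg hx.le 1) (pow_nonneg he 4)) (pow_nonneg hf 1), mul_nonneg (mul_nonneg (pow_nonneg hx.le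 1) (pow_nonneg he 3)) (pow_nonneg hf 2), mul_nonneg (mul_nonneg (pow_nonneg hx.le 1) (pow_nonneg he 2)) (pow_nonneg hf 3), mul_nonneg (mul_nonneg (pow_nonneg hx.le 1) (pow_nonneg he 1)) (pow_nonneg hf 4), mul_nonneg (mul_nonneg (pow_nonneg hx.le 0) (pow_nonneg he 6)) (pow_nonneg hf 0), mul_nonneg (mul_nonneg (pow_nonneg hx.le 0) (pow_nonneg he 5)) (pow_nonneg hf 1), mul_nonneg (mul_nonneg (pow_nonneg hx.le 0) (pow_nonneg he 4)) (pow_nonneg hf 2), mul_nonneg (mul_nonneg (pow_nonneg hx.le 0) (pow_nonneg he 3)) (pow_nonneg hf 3), mul_nonneg (mul_nonneg (pow_nonneg hx.le 0) (pow_nonneg he 2)) (pow_nonneg hf 4)]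
  · intro heq
    have hez : y - x = 0 := by
      by_contra h
      have h' : 0 < y - x := lt_of_le_of_ne he (Ne.symm h)
      have hx5 : 0 < x^5 := pow_pos hx 5
      linarith [hD, hA, mul_pos hx5 h', mul_nonneg (mul_nonneg (pow_nonneg hx.le 5) (pow_nonneg he 0)) (pow_nonneg hf 1), mul_nonneg (mul_nonneg (pow_nonneg hx.le 4) (pow_nonneg he 2)) (pow_nonneg hf 0), mul_nonneg (mul_nonneg (pow_nonneg hx.le 4) (pow_nonneg he 1)) (pow_nonneg hf 1), mul_nonneg (mul_nonneg (pow_nonneg hx.le 4) (pow_nonneg he 0)) (pow_nonneg hf 2), mul_nonneg (mul_nonneg (pow_nonneg hx.le 3) (pow_nonneg he 3)) (pow_nonneg hf 0), mul_nonneg (mul_nonneg (pow_nonneg hx.le 3) (pow_nonneg he 2)) (pow_nonneg hf 1), mul_nonneg (mul_nonneg (pow_nonneg hx.le 3) (pow_nonneg he 1)) (pow_nonneg hf 2), mul_nonneg (mul_nonneg (pow_nonneg hx.le 3) (pow_nonneg he 0)) (pow_nonneg hf 3), mul_nonneg (mul_nonneg (pow_nonneg hx.le 2) (pow_nonneg he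 4)) (pow_nonneg hf 0), mul_nonneg (mul_nonneg (pow_nonneg hx.le 2) (pow_nonneg he 3)) (pow_nonneg hf 1), mul_nonneg (mul_nonneg (pow_nonneg hx.le 2) (pow_nonneg he 2)) (pow_nonneg hf 2), mul_nonneg (mul_nonneg (pow_nonneg hx.le 2) (pow_nonneg he 1)) (pow_nonneg hf 3), mul_nonneg (mul_nonneg (pow_nonneg hx.le 2) (pow_nonneg he 0)) (pow_nonneg hf 4), mul_nonneg (mul_nonneg (pow_nonneg hx.le 1) (pow_nonneg he 5)) (pow_nonneg hf 0), mul_nonneg (mul_nonneg (pow_nonneg hx.le 1) (pow_nonneg he 4)) (pow_nonneg hf 1), mul_nonneg (mul_nonneg (pow_nonneg hx.le 1) (pow_nonneg he 3)) (pow_nonneg hf 2), mul_nonneg (mul_nonneg (pow_nonneg hx.le 1) (pow_nonneg he 2)) (pow_nonneg hf 3), mul_nonneg (mul_nonneg (pow_nonneg hx.le 1) (pow_nonneg he 1)) (pow_nonneg hf 4), mul_nonneg (mul_nonneg (pow_nonneg hx.le 0) (pow_nonneg he 6)) (pow_nonneg hf 0), mul_nonneg (mul_nonneg (pow_nonneg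 hx.le 0) (pow_nonneg he 5)) (pow_nonneg hf 1), mul_nonneg (mul_nonneg (pow_nonneg hx.le 0) (pow_nonneg he 4)) (pow_nonneg hf 2), mul_nonneg (mul_nonneg (pow_nonneg hx.le 0) (pow_nonneg he 3)) (pow_nonneg hf 3), mul_nonneg (mul_nonneg (pow_nonneg hx.le 0) (pow_nonneg he 2)) (pow_nonneg hf 4)]
    have hfz : z - y = 0 := by
      by_contra h
      have h' : 0 < z - y := lt_of_le_of_ne hf (Ne.symm h)
      have hx5 : 0 < x^5 := pow_pos hx 5
      linarith [hD, hA, mul_pos hx5 h', mul_nonneg (mul_nonneg (pow_nonneg hx.le 5) (pow_nonneg he 1)) (pow_nonneg hf 0), mul_nonneg (mul_nonneg (pow_nonneg hx.le 4) (pow_nonneg he 2)) (pow_nonneg hf 0), mul_nonneg (mul_nonneg (pow_nonneg hx.le 4) (pow_nonneg he 1)) (pow_nonneg hf 1), mul_nonneg (mul_nonneg (pow_nonneg hx.le 4) (pow_nonneg he 0)) (pow_nonneg hf 2), mul_nonneg (mul_nonneg (pow_nonneg hx.le 3) (pow_nonneg he 3)) (pow_nonneg hf 0), mul_nonneg (mul_nonneg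 (pow_nonneg hx.le 3) (pow_nonneg he 2)) (pow_nonneg hf 1), mul_nonneg (mul_nonneg (pow_nonneg hx.le 3) (pow_nonneg he 1)) (pow_nonneg hf 2), mul_nonneg (mul_nonneg (pow_nonneg hx.le 3) (pow_nonneg he 0)) (pow_nonneg hf 3), mul_nonneg (mul_nonneg (pow_nonneg hx.le 2) (pow_nonneg he 4)) (pow_nonneg hf 0), mul_nonneg (mul_nonneg (pow_nonneg hx.le 2) (pow_nonneg he 3)) (pow_nonneg hf 1), mul_nonneg (mul_nonneg (pow_nonneg hx.le 2) (pow_nonneg he 2)) (pow_nonneg hf 2), mul_nonneg (mul_nonneg (pow_nonneg hx.le 2) (pow_nonneg he 1)) (pow_nonneg hf 3), mul_nonneg (mul_nonneg (pow_nonneg hx.le 2) (pow_nonneg he 0)) (pow_nonneg hf 4), mul_nonneg (mul_nonneg (pow_nonneg hx.le 1) (pow_nonneg he 5)) (pow_nonneg hf 0), mul_nonneg (mul_nonneg (pow_nonneg hx.le 1) (pow_nonneg he 4)) (pow_nonneg hf 1), mul_nonneg (mul_nonneg (pow_nonneg hx.le 1) (pow_nonneg he 3)) (pow_nonneg hf 2),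 mul_nonneg (mul_nonneg (pow_nonneg hx.le 1) (pow_nonneg he 2)) (pow_nonneg hf 3), mul_nonneg (mul_nonneg (pow_nonneg hx.le 1) (pow_nonneg he 1)) (pow_nonneg hf 4), mul_nonneg (mul_nonneg (pow_nonneg hx.le 0) (pow_nonneg he 6)) (pow_nonneg hf 0), mul_nonneg (mul_nonneg (pow_nonneg hx.le 0) (pow_nonneg he 5)) (pow_nonneg hf 1), mul_nonneg (mul_nonneg (pow_nonneg hx.le 0) (pow_nonneg he 4)) (pow_nonneg hf 2), mul_nonneg (mul_nonneg (pow_nonneg hx.le 0) (pow_nonneg he 3)) (pow_nonneg hf 3), mul_nonneg (mul_nonneg (pow_nonneg hx.le 0) (pow_nonneg he 2)) (pow_nonneg hf 4)]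
    have hy' : y = x := by linarith
    have hz' : z = x := by linarith
    rw [hy', hz'] at heq
    have hx12 : x = 1/2 := by
      have h0 : (36*x^4) * ((2*x-1)*(2*x+1)) = 0 := by linear_combination heq
      rcases mul_eq_zero.1 h0 with h|h
      · exfalso; have := pow_pos hx 4; linarith
      · rcases mul_eq_zero.1 h with h|h
        · linarith
        · exfalso; linarith
    exact ⟨hx12, by linarith, by linarith⟩

theorem key_symm (x y z : ℝ) (hx : 0 < x) (hy : 0 < y) (hz : 0 < z)
    (hxy : 1 ≤ x + y) (hyz : 1 ≤ y + z) (hzx : 1 ≤ z + x) :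
    12*(x+y+z)*(x*y*z) ≤ ((x+y+z)*(x*y+y*z+z*x)+3*(x*y*z))^2 ∧
      (((x+y+z)*(x*y+y*z+z*x)+3*(x*y*z))^2 = 12*(x+y+z)*(x*y*z) →
        x = 1/2 ∧ y = 1/2 ∧ z = 1/2) := by
  rcases le_total x y with h1|h1 <;> rcases le_total y z with h2|h2 <;>
    rcases le_total x z with h3|h3
  · obtain ⟨H1,H2⟩ := sorted_case x y z hx h1 h2 hxy
    exact ⟨by linarith [H1], fun heq => by
      obtain ⟨a1,a2,a3⟩ := H2 (by linarith [heq]); exact ⟨a1,a2,a3⟩⟩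
  · obtain ⟨H1,H2⟩ := sorted_case x y z hx h1 h2 hxy
    exact ⟨by linarith [H1], fun heq => by
      obtain ⟨a1,a2,a3⟩ := H2 (by linarith [heq]); exact ⟨a1,a2,a3⟩⟩
  · obtain ⟨H1,H2⟩ := sorted_case x z y hx h3 h2 (by linarith)
    exact ⟨by linarith [H1], fun heq => by
      obtain ⟨a1,a2,a3⟩ := H2 (by linarith [heq]); exact ⟨a1,a3,a2⟩⟩
  · obtain ⟨H1,H2⟩ := sorted_case z x y hz h3 h1 (by linarith)
    exact ⟨by linarith [H1], fun heq => by
      obtain ⟨a1,a2,a3⟩ := H2 (by linarith [heq]); exact ⟨a2,a3,a1⟩⟩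
  · obtain ⟨H1,H2⟩ := sorted_case y x z hy h1 h3 (by linarith)
    exact ⟨by linarith [H1], fun heq => by
      obtain ⟨a1,a2,a3⟩ := H2 (by linarith [heq]); exact ⟨a2,a1,a3⟩⟩
  · obtain ⟨H1,H2⟩ := sorted_case y z x hy h2 h3 hyz
    exact ⟨by linarith [H1], fun heq => by
      obtain ⟨a1,a2,a3⟩ := H2 (by linarith [heq]); exact ⟨a3,a1,a2⟩⟩
  · obtain ⟨H1,H2⟩ := sorted_case z y x hz h2 h1 (by linarith)
    exact ⟨by linarith [H1], fun heq => by
      obtain ⟨a1,a2,a3⟩ := H2 (by linarith [heq]); exact ⟨a3,a2,a1⟩⟩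
  · obtain ⟨H1,H2⟩ := sorted_case z y x hz h2 h1 (by linarith)
    exact ⟨by linarith [H1], fun heq => by
      obtain ⟨a1,a2,a3⟩ := H2 (by linarith [heq]); exact ⟨a3,a2,a1⟩⟩

/-- For a triangle with side lengths `a, b, c ≥ 1`, with semiperimeter `s` and Heron area `K`,
the sum of the circumradius `a·b·c/(4·K)` and the inradius `K/s` is at least `√3/2`, with
equality if and only if `a = b = c = 1`. -/
theorem circumradius_add_inradius_ge (a b c s K : ℝ)
    (ha : 1 ≤ a) (hb : 1 ≤ b) (hc : 1 ≤ c)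
    (h1 : a < b + c) (h2 : b < a + c) (h3 : c < a + b)
    (hs : s = (a + b + c) / 2)
    (hK : K = Real.sqrt (s * (s - a) * (s - b) * (s - c))) :
    Real.sqrt 3 / 2 ≤ a * b * c / (4 * K) + K / s ∧
      (a * b * c / (4 * K) + K / s = Real.sqrt 3 / 2 ↔ a = 1 ∧ b = 1 ∧ c = 1) := by
  have hx : 0 < s - a := by rw [hs]; linarith
  have hy : 0 < s - b := by rw [hs]; linarith
  have hz : 0 < s - c := by rw [hs]; linarith
  have hxy : 1 ≤ (s - a) + (s - b) := by rw [hs]; linarith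
  have hyz : 1 ≤ (s - b) + (s - c) := by rw [hs]; linarith
  have hzx : 1 ≤ (s - c) + (s - a) := by rw [hs]; linarith
  have hspos : 0 < s := by rw [hs]; linarith
  have hprod : 0 < s * (s - a) * (s - b) * (s - c) := by positivity
  have hK2 : K ^ 2 = s * (s - a) * (s - b) * (s - c) := by
    rw [hK, Real.sq_sqrt hprod.le]
  have hKpos : 0 < K := by rw [hK]; exact Real.sqrt_pos.2 hprod
  obtain ⟨H1, H2⟩ := key_symm (s - a) (s - b) (s - c) hx hy hz hxy hyz hzx
  have hsum : (s - a) + (s - b) + (s - c) = s := by rw [hs]; ring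
  set Y := ((s-a)+(s-b)+(s-c))*((s-a)*(s-b)+(s-b)*(s-c)+(s-c)*(s-a))+3*((s-a)*(s-b)*(s-c)) with hYdef
  have hYpos : 0 < Y := by
    rw [hYdef]
    have hq : 0 < (s-a)*(s-b)+(s-b)*(s-c)+(s-c)*(s-a) :=
      add_pos (add_pos (mul_pos hx hy) (mul_pos hy hz)) (mul_pos hz hx)
    have hp : 0 < (s-a)*(s-b)*(s-c) := mul_pos (mul_pos hx hy) hz
    have hs3 : 0 < (s-a)+(s-b)+(s-c) := by linarith
    have := mul_pos hs3 hq
    linarith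
  rw [hsum] at H1
  have hY : Y = a*b*c + 4*((s-a)*(s-b)*(s-c)) := by rw [hYdef]; rw [hs]; ring
  have hKs : K / s = ((s-a)*(s-b)*(s-c)) / K := by
    rw [div_eq_div_iff (ne_of_gt hspos) (ne_of_gt hKpos)]
    linear_combination hK2
  have hRr : a * b * c / (4 * K) + K / s = Y / (4 * K) := by
    rw [hKs, hY]; ring
  have h12 : 12 * K ^ 2 ≤ Y ^ 2 := by linarith [H1, hK2]
  have hsq3 : Real.sqrt 3 ^ 2 = 3 := Real.sq_sqrt (by norm_num)
  have hge : Real.sqrt 3 / 2 ≤ a * b * c / (4 * K) + K / s := by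
    rw [hRr]
    have h0 : 0 ≤ Y / (2*K) := div_nonneg hYpos.le (by positivity)
    have h3le : (3:ℝ) ≤ (Y/(2*K))^2 := by
      rw [div_pow, le_div_iff₀ (by positivity)]
      nlinarith [h12]
    have ht : Real.sqrt 3 ≤ Y/(2*K) := by
      calc Real.sqrt 3 ≤ Real.sqrt ((Y/(2*K))^2) := Real.sqrt_le_sqrt h3le
        _ = Y/(2*K) := Real.sqrt_sq h0
    have hhalf : Y/(4*K) = (Y/(2*K))/2 := by ring
    linarith
  refine ⟨hge, ?_, ?_⟩
  · intro heq
    rw [hRr] at heq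
    have hYK : Y = 2 * Real.sqrt 3 * K := by
      field_simp [hKpos.ne'] at heq
      linarith
    have hsq : Y ^ 2 = 12 * K ^ 2 := by
      linear_combination (Y + 2*Real.sqrt 3*K) * hYK + 4*K^2 * hsq3
    have hEq : Y^2 = 12*((s-a)+(s-b)+(s-c))*((s-a)*(s-b)*(s-c)) := by
      rw [hsum]
      linarith [hsq, hK2]
    obtain ⟨e1, e2, e3⟩ := H2 hEq
    exact ⟨by linarith, by linarith, by linarith⟩
  · rintro ⟨ha1, hb1, hc1⟩
    subst ha1; subst hb1; subst hc1
    have hs32 : s = 3/2 := by rw [hs]; norm_num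
    have hKval : K = Real.sqrt 3 / 4 := by
      rw [hK, hs32]
      rw [show (3:ℝ)/2 * (3/2 - 1) * (3/2 - 1) * (3/2 - 1) = (Real.sqrt 3/4)^2 by
        rw [div_pow, Real.sq_sqrt (by norm_num : (0:ℝ) ≤ 3)]; norm_num]
      exact Real.sqrt_sq (by positivity)
    rw [hKval, hs32]
    have h3ne : Real.sqrt 3 ≠ 0 := by positivity
    field_simp
    linear_combination (-8) * hsq3
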